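/- arXiv:gr-qc/0005126 — 2 statements merged into one kernel-verified Lean document; each statement's English description precedes it below -/
import Mathlib

section
/- Define, for a real parameter α > 0 and a positive real constant c, the series Z(α) = ∏_{l ∈ (1/2)ℤ, l ≥ 1/2} (1 - (2l+1)·exp(-αc√(l(l+1))))⁻¹ (product over positive half-integers l). Each factor's denominator is nonzero and the infinite product converges for all real α > α₀ := (ln 2)/(c·√(3)/2), i.e. α > 2ln2/(c√3). -/
open Real Filter

private lemma logN_le_aux (n : ℕ) (hn : 2 ≤ n) :
    Real.log n ≤ Real.log 2 * Real.sqrt (((n : ℝ) ^ 2 - 1) / 3) := by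
  have hl2 : (0:ℝ) < Real.log 2 := Real.log_pos (by norm_num)
  have hl2u : Real.log 2 < 0.6931471808 := Real.log_two_lt_d9
  have hl2l : (0.6931471803:ℝ) < Real.log 2 := Real.log_two_gt_d9
  rcases lt_or_ge n 6 with h6 | h6
  · interval_cases n
    · -- n = 2
      norm_num [Real.sqrt_one]
    · -- n = 3
      have harg : (((3:ℕ):ℝ) ^ 2 - 1) / 3 = 8/3 := by norm_num
      rw [harg]
      have h83 : (1.6329:ℝ) ≤ Real.sqrt (8/3) :=
        Real.le_sqrt_of_sq_le (by norm_num)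
      have hu : Real.sqrt (Real.sqrt (3/2)) ≤ 1.1068 := by
        rw [Real.sqrt_le_iff]
        constructor
        · norm_num
        · rw [Real.sqrt_le_iff]; norm_num
      have hld : Real.log (3/2) = 4 * Real.log (Real.sqrt (Real.sqrt (3/2))) := by
        rw [Real.log_sqrt (by positivity), Real.log_sqrt (by norm_num)]; ring
      have hle : Real.log (Real.sqrt (Real.sqrt (3/2))) ≤ 1.1068 - 1 :=
        (Real.log_le_sub_one_of_pos (by positivity)).trans (by linarith)
      have h3 : Real.log 3 = Real.log 2 + Real.log (3/2) := by
        rw [← Real.log_mul (by norm_num) (by norm_num)]; norm_num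
      have hlog3 : Real.log 3 ≤ Real.log 2 + 4 * (1.1068 - 1) := by
        rw [h3, hld]; linarith
      have hmul : Real.log 2 * (1.6329:ℝ) ≤ Real.log 2 * Real.sqrt (8/3) :=
        mul_le_mul_of_nonneg_left h83 hl2.le
      push_cast
      nlinarith
    · -- n = 4
      have harg : (((4:ℕ):ℝ) ^ 2 - 1) / 3 = 5 := by norm_num
      rw [harg]
      have h5 : (2:ℝ) ≤ Real.sqrt 5 := Real.le_sqrt_of_sq_le (by norm_num)
      have h4 : Real.log 4 = 2 * Real.log 2 := by
        rw [show (4:ℝ) = 2^2 by norm_num, Real.log_pow]; push_cast; ring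
      have hmul : Real.log 2 * (2:ℝ) ≤ Real.log 2 * Real.sqrt 5 :=
        mul_le_mul_of_nonneg_left h5 hl2.le
      push_cast
      nlinarith
    · -- n = 5
      have harg : (((5:ℕ):ℝ) ^ 2 - 1) / 3 = 8 := by norm_num
      rw [harg]
      have h8 : (2.8284:ℝ) ≤ Real.sqrt 8 := Real.le_sqrt_of_sq_le (by norm_num)
      have hu : Real.sqrt (5/2) ≤ 1.582 := by
        rw [Real.sqrt_le_iff]; norm_num
      have hld : Real.log (5/2) = 2 * Real.log (Real.sqrt (5/2)) := by
        rw [Real.log_sqrt (by norm_num)]; ring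
      have hle : Real.log (Real.sqrt (5/2)) ≤ 1.582 - 1 :=
        (Real.log_le_sub_one_of_pos (by positivity)).trans (by linarith)
      have h5 : Real.log 5 = Real.log 2 + Real.log (5/2) := by
        rw [← Real.log_mul (by norm_num) (by norm_num)]; norm_num
      have hlog5 : Real.log 5 ≤ Real.log 2 + 2 * (1.582 - 1) := by
        rw [h5, hld]; linarith
      have hmul : Real.log 2 * (2.8284:ℝ) ≤ Real.log 2 * Real.sqrt 8 :=
        mul_le_mul_of_nonneg_left h8 hl2.le
      push_cast
      nlinarith
  · -- n ≥ 6
    have hn6 : (6:ℝ) ≤ (n:ℝ) := by exact_mod_cast h6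
    have hpos : (0:ℝ) < (n:ℝ) := by linarith
    have hA : Real.log n ≤ (n:ℝ)/8 + 3 * Real.log 2 - 1 := by
      have h1 : Real.log ((n:ℝ)/8) ≤ (n:ℝ)/8 - 1 :=
        Real.log_le_sub_one_of_pos (by positivity)
      have h2 : Real.log ((n:ℝ)/8) = Real.log n - Real.log 8 :=
        Real.log_div (ne_of_gt hpos) (by norm_num)
      have h8 : Real.log 8 = 3 * Real.log 2 := by
        rw [show (8:ℝ) = 2^3 by norm_num, Real.log_pow]; push_cast; ring
      linarith
    have hB : (0.577:ℝ) * ((n:ℝ) - 1) ≤ Real.sqrt (((n:ℝ)^2 - 1)/3) := by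
      apply Real.le_sqrt_of_sq_le
      nlinarith
    have hC : Real.log 2 * ((0.577:ℝ) * ((n:ℝ) - 1)) ≤
        Real.log 2 * Real.sqrt (((n:ℝ)^2 - 1)/3) :=
      mul_le_mul_of_nonneg_left hB hl2.le
    have hD : 0.6931471803 * ((0.577:ℝ) * ((n:ℝ) - 1)) ≤
        Real.log 2 * ((0.577:ℝ) * ((n:ℝ) - 1)) := by
      apply mul_le_mul_of_nonneg_right hl2l.le
      nlinarith
    linarith

theorem stmt6 (c α : ℝ) (hc : 0 < c) (hα : 2 * Real.log 2 / (c * Real.sqrt 3) < α) :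
    (∀ j : ℕ,
      1 - ((j : ℝ) + 2) * Real.exp (-α * c *
        Real.sqrt ((((j : ℝ) + 1) / 2) * (((j : ℝ) + 1) / 2 + 1))) ≠ 0) ∧
    Multipliable (fun j : ℕ =>
      (1 - ((j : ℝ) + 2) * Real.exp (-α * c *
        Real.sqrt ((((j : ℝ) + 1) / 2) * (((j : ℝ) + 1) / 2 + 1))))⁻¹) := by
  have hl2 : (0:ℝ) < Real.log 2 := Real.log_pos (by norm_num)
  have hs3 : (0:ℝ) < Real.sqrt 3 := Real.sqrt_pos.mpr (by norm_num)
  have hα0 : 0 < α := lt_trans (by positivity) hα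
  have hαc : 2 * Real.log 2 / Real.sqrt 3 < α * c := by
    rw [div_lt_iff₀ (by positivity)] at hα
    rw [div_lt_iff₀ hs3]
    nlinarith
  have hαc0 : 0 < α * c := lt_trans (by positivity) hαc
  set f : ℕ → ℝ := fun j => ((j : ℝ) + 2) * Real.exp (-α * c *
      Real.sqrt ((((j : ℝ) + 1) / 2) * (((j : ℝ) + 1) / 2 + 1))) with hf
  have hfpos : ∀ j, 0 < f j := fun j => by positivity
  -- key inequality
  have key : ∀ j : ℕ, Real.log ((j:ℝ) + 2) <
      α * c * Real.sqrt ((((j : ℝ) + 1) / 2) * (((j : ℝ) + 1) / 2 + 1)) := by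
    intro j
    have harg : (((j : ℝ) + 1) / 2) * (((j : ℝ) + 1) / 2 + 1)
        = (((j:ℝ)+2)^2 - 1)/4 := by ring
    have hnn : (0:ℝ) ≤ ((j:ℝ)+2)^2 - 1 := by nlinarith [Nat.cast_nonneg (α := ℝ) j]
    have h4 : Real.sqrt ((((j:ℝ)+2)^2 - 1)/4) = Real.sqrt (((j:ℝ)+2)^2 - 1) / 2 := by
      rw [Real.sqrt_div hnn, show Real.sqrt 4 = 2 by
        rw [show (4:ℝ) = 2^2 by norm_num, Real.sqrt_sq (by norm_num)]]
    have h3 : Real.sqrt ((((j:ℝ)+2)^2 - 1)/3) = Real.sqrt (((j:ℝ)+2)^2 - 1) / Real.sqrt 3 :=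
      Real.sqrt_div hnn 3
    have hL := logN_le_aux (j+2) (by omega)
    have hcast : ((j+2 : ℕ):ℝ) = (j:ℝ) + 2 := by push_cast; ring
    rw [hcast] at hL
    rw [h3] at hL
    have hspos : 0 < Real.sqrt (((j:ℝ)+2)^2 - 1) := by
      apply Real.sqrt_pos.mpr
      nlinarith [Nat.cast_nonneg (α := ℝ) j]
    have hstep : (2 * Real.log 2 / Real.sqrt 3) * (Real.sqrt (((j:ℝ)+2)^2 - 1) / 2)
        < α * c * (Real.sqrt (((j:ℝ)+2)^2 - 1) / 2) :=
      mul_lt_mul_of_pos_right hαc (by positivity)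
    have heq : (2 * Real.log 2 / Real.sqrt 3) * (Real.sqrt (((j:ℝ)+2)^2 - 1) / 2)
        = Real.log 2 * (Real.sqrt (((j:ℝ)+2)^2 - 1) / Real.sqrt 3) := by
      field_simp
    rw [harg, h4]
    calc Real.log ((j:ℝ) + 2) ≤ Real.log 2 * (Real.sqrt (((j:ℝ)+2)^2 - 1) / Real.sqrt 3) := hL
      _ = (2 * Real.log 2 / Real.sqrt 3) * (Real.sqrt (((j:ℝ)+2)^2 - 1) / 2) := heq.symm
      _ < α * c * (Real.sqrt (((j:ℝ)+2)^2 - 1) / 2) := hstep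
  -- f j < 1
  have hflt : ∀ j, f j < 1 := by
    intro j
    have hj2 : (0:ℝ) < (j:ℝ) + 2 := by positivity
    have hexp : Real.exp (-α * c *
        Real.sqrt ((((j : ℝ) + 1) / 2) * (((j : ℝ) + 1) / 2 + 1))) < ((j:ℝ)+2)⁻¹ := by
      have h1 : -α * c * Real.sqrt ((((j : ℝ) + 1) / 2) * (((j : ℝ) + 1) / 2 + 1))
          < -Real.log ((j:ℝ)+2) := by
        have := key j; nlinarith [this]
      calc Real.exp _ < Real.exp (-Real.log ((j:ℝ)+2)) := Real.exp_lt_exp.mpr h1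
        _ = ((j:ℝ)+2)⁻¹ := by rw [Real.exp_neg, Real.exp_log hj2]
    calc f j < ((j:ℝ)+2) * ((j:ℝ)+2)⁻¹ := by
          exact mul_lt_mul_of_pos_left hexp hj2
      _ = 1 := mul_inv_cancel₀ (ne_of_gt hj2)
  have hne : ∀ j : ℕ, 1 - f j ≠ 0 := fun j => by
    have := hflt j; have := hfpos j; intro h; linarith [sub_eq_zero.mp h]
  refine ⟨hne, ?_⟩
  -- summable geometric bound
  set r : ℝ := Real.exp (-(α * c * Real.sqrt 3 / 4)) with hr
  have hr0 : 0 < r := Real.exp_pos _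
  have hr1 : r < 1 := Real.exp_lt_one_iff.mpr (by nlinarith [hs3, hαc0])
  set g : ℕ → ℝ := fun j => ((j:ℝ) + 2) * r ^ (j + 2) with hg
  have hgpos : ∀ j, 0 < g j := fun j => by positivity
  have hfg : ∀ j, f j ≤ g j := by
    intro j
    have hsq : Real.sqrt 3 * ((j:ℝ)+2) / 4 ≤
        Real.sqrt ((((j : ℝ) + 1) / 2) * (((j : ℝ) + 1) / 2 + 1)) := by
      apply Real.le_sqrt_of_sq_le
      have h3 : Real.sqrt 3 ^ 2 = 3 := Real.sq_sqrt (by norm_num)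
      have : (Real.sqrt 3 * ((j:ℝ)+2) / 4)^2 = 3 * ((j:ℝ)+2)^2 / 16 := by
        rw [div_pow, mul_pow, h3]; norm_num
      rw [this]
      nlinarith [Nat.cast_nonneg (α := ℝ) j]
    have hexp : Real.exp (-α * c *
        Real.sqrt ((((j : ℝ) + 1) / 2) * (((j : ℝ) + 1) / 2 + 1))) ≤ r ^ (j + 2) := by
      rw [hr, ← Real.exp_nat_mul]
      apply Real.exp_le_exp.mpr
      push_cast
      have := mul_le_mul_of_nonneg_left hsq hαc0.le
      nlinarith [this]
    calc f j ≤ ((j:ℝ)+2) * r ^ (j+2) :=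
        mul_le_mul_of_nonneg_left hexp (by positivity)
      _ = g j := rfl
  have hgsum : Summable g := by
    have h := summable_pow_mul_geometric_of_norm_lt_one (R := ℝ) 1
      (r := r) (by rwa [Real.norm_eq_abs, abs_of_pos hr0])
    have h2 := (summable_nat_add_iff 2).mpr h
    apply h2.congr
    intro j
    simp only [pow_one]
    push_cast
    ring
  have hgto : Tendsto g atTop (nhds 0) := hgsum.tendsto_atTop_zero
  have hev : ∀ᶠ j in atTop, g j < 1/2 := hgto.eventually_lt_const (by norm_num)
  -- summability of logs
  have hlogsum : Summable (fun j : ℕ => Real.log ((1 - f j)⁻¹)) := by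
    apply summable_of_isBigO_nat hgsum
    rw [Asymptotics.isBigO_iff]
    refine ⟨2, ?_⟩
    filter_upwards [hev] with j hj
    have hfj2 : f j ≤ 1/2 := le_trans (hfg j) hj.le
    have h1f : (0:ℝ) < 1 - f j := by linarith [hflt j]
    have h1f2 : (1:ℝ)/2 ≤ 1 - f j := by linarith
    have hlog : Real.log ((1 - f j)⁻¹) = -Real.log (1 - f j) := Real.log_inv _
    have hlow : 1 - (1 - f j)⁻¹ ≤ Real.log (1 - f j) :=
      Real.one_sub_inv_le_log_of_pos h1f
    have hinv : (1 - f j)⁻¹ ≤ 2 := by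
      rw [inv_le_comm₀ h1f (by norm_num)]
      linarith
    have hup : -Real.log (1 - f j) ≤ (1 - f j)⁻¹ - 1 := by linarith
    have hfrac : (1 - f j)⁻¹ - 1 = f j * (1 - f j)⁻¹ := by
      field_simp
      ring
    have hbound : -Real.log (1 - f j) ≤ 2 * f j := by
      rw [hfrac] at hup
      have : f j * (1 - f j)⁻¹ ≤ f j * 2 :=
        mul_le_mul_of_nonneg_left hinv (hfpos j).le
      linarith
    have hnonneg : 0 ≤ -Real.log (1 - f j) := by
      have : Real.log (1 - f j) ≤ 0 :=
        Real.log_nonpos (by linarith) (by linarith [hfpos j])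
      linarith
    rw [hlog, Real.norm_eq_abs, Real.norm_eq_abs, abs_of_nonneg hnonneg,
      abs_of_pos (hgpos j)]
    calc -Real.log (1 - f j) ≤ 2 * f j := hbound
      _ ≤ 2 * g j := by linarith [hfg j]
  exact Real.multipliable_of_summable_log
    (fun j => inv_pos.mpr (by linarith [hflt j])) hlogsum
end

section
/- For positive half-integers l (i.e. l ∈ {1/2, 1, 3/2, …}), the function l ↦ ln(2l+1)/√(l(l+1)) attains its maximum at l = 1/2, where it equals 2·ln 2/√3. -/
lemma key_sq (x : ℝ) (hx : 3 ≤ x) :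
    3 * (Real.log x)^2 ≤ (Real.log 2)^2 * (x^2 - 1) := by
  have hx0 : (0:ℝ) < x := by linarith
  have he : (0:ℝ) < Real.exp 1 := Real.exp_pos 1
  have h1 : Real.log (x / Real.exp 1) ≤ x / Real.exp 1 - 1 :=
    Real.log_le_sub_one_of_pos (by positivity)
  rw [Real.log_div (ne_of_gt hx0) (ne_of_gt he), Real.log_exp] at h1
  have h2 : Real.log x * Real.exp 1 ≤ x := by
    have h3 : Real.log x ≤ x / Real.exp 1 := by linarith
    exact (le_div_iff₀ he).mp h3
  have hL0 : 0 ≤ Real.log x := Real.log_nonneg (by linarith)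
  have hA : (Real.log x * Real.exp 1)^2 ≤ x^2 := by
    have := pow_le_pow_left₀ (by positivity) h2 2
    exact this
  have he9 : (2.7182818283:ℝ) < Real.exp 1 := Real.exp_one_gt_d9
  have he2 : (7.389056096:ℝ) ≤ (Real.exp 1)^2 := by nlinarith [he9]
  have hL2 : (Real.log x)^2 * 7.389056096 ≤ x^2 := by
    nlinarith [sq_nonneg (Real.log x)]
  have hl9 : (0.6931471803:ℝ) < Real.log 2 := Real.log_two_gt_d9
  have hG2 : (0.48:ℝ) ≤ (Real.log 2)^2 := by nlinarith [hl9]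
  have hx2 : (9:ℝ) ≤ x^2 := by nlinarith
  nlinarith [hL2, hG2, hx2, mul_le_mul_of_nonneg_right hG2 (by nlinarith : (0:ℝ) ≤ x^2 - 1)]

lemma key_sqrt (j : ℕ) :
    Real.sqrt 3 * Real.log ((j:ℝ) + 2)
      ≤ Real.log 2 * Real.sqrt (((j:ℝ) + 2)^2 - 1) := by
  rcases Nat.eq_zero_or_pos j with hj | hj
  · subst hj
    norm_num
    exact le_of_eq (mul_comm _ _)
  · have h3 : (3:ℝ) ≤ (j:ℝ) + 2 := by
      have : (1:ℝ) ≤ (j:ℝ) := by exact_mod_cast hj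
      linarith
    have hkey := key_sq ((j:ℝ) + 2) h3
    have hLn : 0 ≤ Real.log ((j:ℝ) + 2) := Real.log_nonneg (by linarith)
    have hG : 0 ≤ Real.log 2 := Real.log_nonneg (by norm_num)
    calc Real.sqrt 3 * Real.log ((j:ℝ) + 2)
        = Real.sqrt (3 * (Real.log ((j:ℝ) + 2))^2) := by
          rw [Real.sqrt_mul (by norm_num), Real.sqrt_sq hLn]
      _ ≤ Real.sqrt ((Real.log 2)^2 * (((j:ℝ) + 2)^2 - 1)) := Real.sqrt_le_sqrt hkey
      _ = Real.log 2 * Real.sqrt (((j:ℝ) + 2)^2 - 1) := by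
          rw [Real.sqrt_mul (sq_nonneg _), Real.sqrt_sq hG]

theorem stmt7 :
    (∀ j : ℕ,
      Real.log (2 * (((j : ℝ) + 1) / 2) + 1) /
          Real.sqrt ((((j : ℝ) + 1) / 2) * (((j : ℝ) + 1) / 2 + 1))
        ≤ 2 * Real.log 2 / Real.sqrt 3) ∧
    Real.log (2 * (1 / 2 : ℝ) + 1) / Real.sqrt ((1 / 2 : ℝ) * (1 / 2 + 1))
      = 2 * Real.log 2 / Real.sqrt 3 := by
  constructor
  · intro j
    have harg1 : 2*(((j:ℝ)+1)/2)+1 = (j:ℝ)+2 := by ring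
    have harg2 : (((j:ℝ)+1)/2) * (((j:ℝ)+1)/2+1) = (((j:ℝ)+2)^2 - 1)/4 := by ring
    rw [harg1, harg2]
    have hj0 : (0:ℝ) ≤ (j:ℝ) := Nat.cast_nonneg j
    have hpos : (0:ℝ) < ((j:ℝ)+2)^2 - 1 := by nlinarith
    have hs4 : Real.sqrt 4 = 2 := by
      rw [show (4:ℝ) = 2^2 by norm_num, Real.sqrt_sq (by norm_num)]
    have hsq : Real.sqrt ((((j:ℝ)+2)^2 - 1)/4) = Real.sqrt (((j:ℝ)+2)^2 - 1)/2 := by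
      rw [Real.sqrt_div hpos.le, hs4]
    rw [hsq, div_le_div_iff₀ (by positivity) (Real.sqrt_pos.mpr (by norm_num : (0:ℝ) < 3))]
    have hkey := key_sqrt j
    nlinarith [hkey]
  · have h1 : 2 * (1/2:ℝ) + 1 = 2 := by norm_num
    have h2 : (1/2:ℝ) * (1/2 + 1) = 3/4 := by norm_num
    rw [h1, h2]
    have hs4 : Real.sqrt 4 = 2 := by
      rw [show (4:ℝ) = 2^2 by norm_num, Real.sqrt_sq (by norm_num)]
    have hsq : Real.sqrt (3/4:ℝ) = Real.sqrt 3 / 2 := by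
      rw [Real.sqrt_div (by norm_num : (0:ℝ) ≤ 3), hs4]
    rw [hsq]
    have h3 : Real.sqrt 3 ≠ 0 := ne_of_gt (Real.sqrt_pos.mpr (by norm_num))
    field_simp
end
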